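/- arXiv:1205.3561 — 3 statements merged into one kernel-verified Lean document; each statement's English description precedes it below -/
import Mathlib

section
/- If X : U → ℝ³ \ {c} is a regular surface patch with first fundamental form I_X, then the inverse patch Y = Φ∘X has first fundamental form I_Y = λ²·I_X, where λ = r²/‖X−c‖². Concretely, E_Y = λ²E_X, F_Y = λ²F_X, G_Y = λ²G_X, where E,F,G denote the usual inner products of partial derivatives. -/
open RealInnerProductSpace

section Aux

variable {E : Type*} [NormedAddCommGroup E] [InnerProductSpace ℝ E]

lemma inversion_hasFDerivAt (c : E) (r : ℝ) (p : E) (hp : p ≠ c) :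
    HasFDerivAt (fun p => c + (r ^ 2 / ‖p - c‖ ^ 2) • (p - c))
      ((r ^ 2 / ‖p - c‖ ^ 2) • ContinuousLinearMap.id ℝ E -
        (2 * (r ^ 2 / ‖p - c‖ ^ 2) / ‖p - c‖ ^ 2) •
          ((innerSL ℝ (p - c)).smulRight (p - c))) p := by
  have hne : p - c ≠ 0 := sub_ne_zero.mpr hp
  have hns : ‖p - c‖ ^ 2 ≠ 0 := pow_ne_zero _ (norm_ne_zero_iff.mpr hne)
  have h1 : HasFDerivAt (fun p : E => p - c) (ContinuousLinearMap.id ℝ E) p :=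
    (hasFDerivAt_id p).sub_const c
  have h2 : HasFDerivAt (fun p : E => ‖p - c‖ ^ 2)
      (2 • (innerSL ℝ (p - c)).comp (ContinuousLinearMap.id ℝ E)) p := h1.norm_sq
  have hnn : ‖p - c‖ ≠ 0 := norm_ne_zero_iff.mpr hne
  have h3 := ((hasFDerivAt_inv' (𝕜 := ℝ) hns).comp p h2).const_mul (r ^ 2)
  have h4 := (h3.smul h1).const_add c
  have heq : (fun x : E => c + (r ^ 2 * (Inv.inv ∘ fun p : E => ‖p - c‖ ^ 2) x) • (x - c)) =
      fun p : E => c + (r ^ 2 / ‖p - c‖ ^ 2) • (p - c) := by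
    funext x
    simp [div_eq_mul_inv, Function.comp]
  simp only [Pi.smul_apply'] at h4
  rw [heq] at h4
  convert h4 using 1
  ext v
  simp only [ContinuousLinearMap.sub_apply, ContinuousLinearMap.smul_apply,
    ContinuousLinearMap.id_apply, ContinuousLinearMap.smulRight_apply,
    ContinuousLinearMap.coe_comp', Function.comp_apply, innerSL_apply_apply, ContinuousLinearMap.add_apply, ContinuousLinearMap.coe_smul',
    Pi.smul_apply, ContinuousLinearMap.neg_apply, ContinuousLinearMap.mulLeftRight_apply,
    two_smul, smul_eq_mul]
  match_scalars <;> field_simp <;> ring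

lemma inner_conf (u a b : E) (lam : ℝ) (hu : u ≠ 0) :
    ⟪lam • a - (2 * lam / ‖u‖ ^ 2 * ⟪u, a⟫) • u,
      lam • b - (2 * lam / ‖u‖ ^ 2 * ⟪u, b⟫) • u⟫ = lam ^ 2 * ⟪a, b⟫ := by
  have h : ⟪u, u⟫ = ‖u‖ ^ 2 := real_inner_self_eq_norm_sq u
  have hns : ‖u‖ ^ 2 ≠ 0 := pow_ne_zero _ (norm_ne_zero_iff.mpr hu)
  simp only [inner_sub_left, inner_sub_right, real_inner_smul_left, real_inner_smul_right, h,
    real_inner_comm u a, real_inner_comm u b]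
  field_simp
  ring

end Aux

/-- If `X` is a regular surface patch avoiding the center `c` of the inversion `Φ[c,r]`,
then the inverse patch `Y = Φ ∘ X` has first fundamental form `I_Y = λ² I_X`,
where `λ = r²/‖X−c‖²`: concretely `E_Y = λ²E_X`, `F_Y = λ²F_X`, `G_Y = λ²G_X`. -/
theorem inverse_patch_first_fundamental_form
    (c : EuclideanSpace ℝ (Fin 3)) (r : ℝ) (hr : 0 < r)
    (Φ : EuclideanSpace ℝ (Fin 3) → EuclideanSpace ℝ (Fin 3))
    (hΦ : ∀ p, Φ p = c + (r ^ 2 / ‖p - c‖ ^ 2) • (p - c))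
    (U : Set (ℝ × ℝ)) (hU : IsOpen U)
    (X : ℝ × ℝ → EuclideanSpace ℝ (Fin 3))
    (hXdiff : ∀ q ∈ U, DifferentiableAt ℝ X q)
    (hXc : ∀ q ∈ U, X q ≠ c)
    (hXreg : ∀ q ∈ U, LinearMap.ker (fderiv ℝ X q).toLinearMap = ⊥)
    (Y : ℝ × ℝ → EuclideanSpace ℝ (Fin 3)) (hY : Y = Φ ∘ X)
    (q : ℝ × ℝ) (hq : q ∈ U)
    (lam : ℝ) (hlam : lam = r ^ 2 / ‖X q - c‖ ^ 2) :
    ⟪fderiv ℝ Y q (1, 0), fderiv ℝ Y q (1, 0)⟫ =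
        lam ^ 2 * ⟪fderiv ℝ X q (1, 0), fderiv ℝ X q (1, 0)⟫ ∧
      ⟪fderiv ℝ Y q (1, 0), fderiv ℝ Y q (0, 1)⟫ =
        lam ^ 2 * ⟪fderiv ℝ X q (1, 0), fderiv ℝ X q (0, 1)⟫ ∧
      ⟪fderiv ℝ Y q (0, 1), fderiv ℝ Y q (0, 1)⟫ =
        lam ^ 2 * ⟪fderiv ℝ X q (0, 1), fderiv ℝ X q (0, 1)⟫ := by
  have hΦfun : Φ = fun p => c + (r ^ 2 / ‖p - c‖ ^ 2) • (p - c) := funext hΦ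
  have hu : X q - c ≠ 0 := sub_ne_zero.mpr (hXc q hq)
  set L := ((r ^ 2 / ‖X q - c‖ ^ 2) • ContinuousLinearMap.id ℝ (EuclideanSpace ℝ (Fin 3)) -
      (2 * (r ^ 2 / ‖X q - c‖ ^ 2) / ‖X q - c‖ ^ 2) •
        ((innerSL ℝ (X q - c)).smulRight (X q - c))) with hL
  have hYd : HasFDerivAt Y (L.comp (fderiv ℝ X q)) q := by
    rw [hY, hΦfun]
    exact (inversion_hasFDerivAt c r (X q) (hXc q hq)).comp q (hXdiff q hq).hasFDerivAt
  have hfY : fderiv ℝ Y q = L.comp (fderiv ℝ X q) := hYd.fderiv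
  have key : ∀ a b : EuclideanSpace ℝ (Fin 3), ⟪L a, L b⟫ = lam ^ 2 * ⟪a, b⟫ := by
    intro a b
    have hLval : ∀ v, L v = lam • v - (2 * lam / ‖X q - c‖ ^ 2 * ⟪X q - c, v⟫) • (X q - c) := by
      intro v
      rw [hL]
      simp only [ContinuousLinearMap.sub_apply, ContinuousLinearMap.smul_apply,
        ContinuousLinearMap.id_apply, ContinuousLinearMap.smulRight_apply, innerSL_apply_apply,
        smul_smul, hlam]
    rw [hLval a, hLval b]
    exact inner_conf (X q - c) a b lam hu
  refine ⟨?_, ?_, ?_⟩ <;> · rw [hfY]; exact key _ _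
end

section
/- Let Y = Φ∘X be the inverse surface of X under inversion Φ[c,r], with λ = r²/‖X−c‖² and η = ⟨U_X, X−c⟩. Then the Gauss curvatures satisfy K_Y = λ⁻²K_X + (4/r²)λ⁻¹ η H_X + (4/r⁴)η². -/
open RealInnerProductSpace

private lemma aux_first (c : EuclideanSpace ℝ (Fin 3)) (r : ℝ)
    (X Y : ℝ × ℝ → EuclideanSpace ℝ (Fin 3)) (hX : ContDiff ℝ 2 X) (hXc : ∀ q, X q ≠ c)
    (hYfun : Y = fun p => c + (r ^ 2 * (⟪X p - c, X p - c⟫)⁻¹) • (X p - c))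
    (p : ℝ × ℝ) (v : ℝ × ℝ) :
    fderiv ℝ Y p v = (r ^ 2 * (⟪X p - c, X p - c⟫)⁻¹) • fderiv ℝ X p v
      - (2 * r ^ 2 * ((⟪X p - c, X p - c⟫)⁻¹ * (⟪X p - c, X p - c⟫)⁻¹ *
          ⟪X p - c, fderiv ℝ X p v⟫)) • (X p - c) := by
  have hXd : HasFDerivAt X (fderiv ℝ X p) p := ((hX.differentiable two_ne_zero) p).hasFDerivAt
  have hfd : HasFDerivAt (fun y => X y - c) (fderiv ℝ X p) p := hXd.sub_const c
  have hne : ⟪X p - c, X p - c⟫ ≠ 0 := by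
    rw [real_inner_self_eq_norm_sq]
    exact pow_ne_zero 2 (norm_ne_zero_iff.mpr (sub_ne_zero.mpr (hXc p)))
  have hn := hfd.inner ℝ hfd
  have hinv : HasFDerivAt (fun y => (⟪X y - c, X y - c⟫ : ℝ)⁻¹)
      (-((⟪X p - c, X p - c⟫:ℝ) ^ 2)⁻¹ •
        ((fderivInnerCLM ℝ (X p - c, X p - c)).comp ((fderiv ℝ X p).prod (fderiv ℝ X p)))) p :=
    (hasDerivAt_inv hne).comp_hasFDerivAt p hn
  have hg := hinv.const_mul (r ^ 2)
  have hYd := (hg.smul hfd).const_add c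
  rw [hYfun, (show HasFDerivAt (fun p => c + (r ^ 2 * (⟪X p - c, X p - c⟫)⁻¹) • (X p - c)) _ p from hYd).fderiv]
  simp only [ContinuousLinearMap.add_apply, ContinuousLinearMap.coe_smul',
    ContinuousLinearMap.smulRight_apply, ContinuousLinearMap.coe_comp', Function.comp_apply,
    ContinuousLinearMap.prod_apply, fderivInnerCLM_apply, Pi.smul_apply, smul_eq_mul,
    ContinuousLinearMap.smul_apply, ContinuousLinearMap.neg_apply]
  rw [real_inner_comm ((fderiv ℝ X p) v) (X p - c)]
  module

private lemma aux_second (c : EuclideanSpace ℝ (Fin 3)) (r : ℝ)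
    (X Y : ℝ × ℝ → EuclideanSpace ℝ (Fin 3)) (hX : ContDiff ℝ 2 X) (hXc : ∀ q, X q ≠ c)
    (hYfun : Y = fun p => c + (r ^ 2 * (⟪X p - c, X p - c⟫)⁻¹) • (X p - c))
    (q : ℝ × ℝ) (v w : ℝ × ℝ) :
    fderiv ℝ (fun p => fderiv ℝ Y p v) q w =
      (r ^ 2 * (⟪X q - c, X q - c⟫)⁻¹) • fderiv ℝ (fun p => fderiv ℝ X p v) q w
      - (2 * r ^ 2 * (⟪X q - c, X q - c⟫)⁻¹ * (⟪X q - c, X q - c⟫)⁻¹ *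
          ⟪X q - c, fderiv ℝ X q w⟫) • fderiv ℝ X q v
      - (2 * r ^ 2 * (⟪X q - c, X q - c⟫)⁻¹ * (⟪X q - c, X q - c⟫)⁻¹ *
          ⟪X q - c, fderiv ℝ X q v⟫) • fderiv ℝ X q w
      - (2 * r ^ 2 * (⟪X q - c, X q - c⟫)⁻¹ * (⟪X q - c, X q - c⟫)⁻¹ *
          (⟪fderiv ℝ X q v, fderiv ℝ X q w⟫ +
            ⟪X q - c, fderiv ℝ (fun p => fderiv ℝ X p v) q w⟫)) • (X q - c)
      + (8 * r ^ 2 * (⟪X q - c, X q - c⟫)⁻¹ * (⟪X q - c, X q - c⟫)⁻¹ * (⟪X q - c, X q - c⟫)⁻¹ *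
          ⟪X q - c, fderiv ℝ X q v⟫ * ⟪X q - c, fderiv ℝ X q w⟫) • (X q - c) := by
  have h1 : (fun p => fderiv ℝ Y p v) = (fun p =>
      (r ^ 2 * (⟪X p - c, X p - c⟫)⁻¹) • fderiv ℝ X p v
      - (2 * r ^ 2 * ((⟪X p - c, X p - c⟫)⁻¹ * (⟪X p - c, X p - c⟫)⁻¹ *
          ⟪X p - c, fderiv ℝ X p v⟫)) • (X p - c)) :=
    funext fun p => aux_first c r X Y hX hXc hYfun p v
  rw [h1]
  have hXd : HasFDerivAt X (fderiv ℝ X q) q := ((hX.differentiable two_ne_zero) q).hasFDerivAt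
  have hfd : HasFDerivAt (fun y => X y - c) (fderiv ℝ X q) q := hXd.sub_const c
  have hne : ⟪X q - c, X q - c⟫ ≠ 0 := by
    rw [real_inner_self_eq_norm_sq]
    exact pow_ne_zero 2 (norm_ne_zero_iff.mpr (sub_ne_zero.mpr (hXc q)))
  have hn := hfd.inner ℝ hfd
  have hinv : HasFDerivAt (fun y => (⟪X y - c, X y - c⟫ : ℝ)⁻¹)
      (-((⟪X q - c, X q - c⟫:ℝ) ^ 2)⁻¹ •
        ((fderivInnerCLM ℝ (X q - c, X q - c)).comp ((fderiv ℝ X q).prod (fderiv ℝ X q)))) q :=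
    (hasDerivAt_inv hne).comp_hasFDerivAt q hn
  have hg := hinv.const_mul (r ^ 2)
  have hAv : HasFDerivAt (fun p => fderiv ℝ X p v)
      (fderiv ℝ (fun p => fderiv ℝ X p v) q) q := by
    have h2 : ContDiff ℝ 1 (fun p => fderiv ℝ X p v) :=
      (hX.fderiv_right (le_refl 2)).clm_apply contDiff_const
    exact ((h2.differentiable one_ne_zero) q).hasFDerivAt
  have hip := hfd.inner ℝ hAv
  have hm := ((hinv.mul hinv).mul hip).const_mul (2 * r ^ 2)
  have hF := (hg.smul hAv).sub (hm.smul hfd)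
  rw [(show HasFDerivAt (fun p => (r ^ 2 * (⟪X p - c, X p - c⟫)⁻¹) • fderiv ℝ X p v
      - (2 * r ^ 2 * ((⟪X p - c, X p - c⟫)⁻¹ * (⟪X p - c, X p - c⟫)⁻¹ *
          ⟪X p - c, fderiv ℝ X p v⟫)) • (X p - c)) _ q from hF).fderiv]
  simp only [ContinuousLinearMap.add_apply, ContinuousLinearMap.coe_smul',
    ContinuousLinearMap.smulRight_apply, ContinuousLinearMap.coe_comp', Function.comp_apply,
    ContinuousLinearMap.prod_apply, fderivInnerCLM_apply, Pi.smul_apply, smul_eq_mul,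
    ContinuousLinearMap.smul_apply, ContinuousLinearMap.neg_apply, ContinuousLinearMap.sub_apply, Pi.mul_apply]
  rw [real_inner_comm ((fderiv ℝ X q) w) (X q - c),
    real_inner_comm ((fderiv ℝ X q) v) (X q - c),
    real_inner_comm ((fderiv ℝ (fun p => fderiv ℝ X p v) q) w) (X q - c),
    real_inner_comm ((fderiv ℝ X q) w) ((fderiv ℝ X q) v)]
  module


set_option maxHeartbeats 4000000 in
/-- For the inverse surface `Y = Φ∘X` under the inversion `Φ[c,r]`, with `λ = r²/‖X−c‖²`
and `η = ⟨U_X, X−c⟩`, the Gauss curvatures satisfy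
`K_Y = λ⁻²K_X + (4/r²)λ⁻¹ηH_X + (4/r⁴)η²`. -/
theorem inverse_surface_gauss_curvature
    (c : EuclideanSpace ℝ (Fin 3)) (r : ℝ) (hr : 0 < r)
    (Φ : EuclideanSpace ℝ (Fin 3) → EuclideanSpace ℝ (Fin 3))
    (hΦ : ∀ p, Φ p = c + (r ^ 2 / ‖p - c‖ ^ 2) • (p - c))
    (X : ℝ × ℝ → EuclideanSpace ℝ (Fin 3)) (hX : ContDiff ℝ 2 X)
    (hXc : ∀ q, X q ≠ c)
    (Y : ℝ × ℝ → EuclideanSpace ℝ (Fin 3)) (hY : Y = Φ ∘ X)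
    (q : ℝ × ℝ)
    -- first and second partial derivatives of X and Y at q
    (Xs Xu Xss Xsu Xuu Ys Yu Yss Ysu Yuu UX UY : EuclideanSpace ℝ (Fin 3))
    (hXs : Xs = fderiv ℝ X q (1, 0)) (hXu : Xu = fderiv ℝ X q (0, 1))
    (hXss : Xss = fderiv ℝ (fun p => fderiv ℝ X p (1, 0)) q (1, 0))
    (hXsu : Xsu = fderiv ℝ (fun p => fderiv ℝ X p (1, 0)) q (0, 1))
    (hXuu : Xuu = fderiv ℝ (fun p => fderiv ℝ X p (0, 1)) q (0, 1))
    (hYs : Ys = fderiv ℝ Y q (1, 0)) (hYu : Yu = fderiv ℝ Y q (0, 1))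
    (hYss : Yss = fderiv ℝ (fun p => fderiv ℝ Y p (1, 0)) q (1, 0))
    (hYsu : Ysu = fderiv ℝ (fun p => fderiv ℝ Y p (1, 0)) q (0, 1))
    (hYuu : Yuu = fderiv ℝ (fun p => fderiv ℝ Y p (0, 1)) q (0, 1))
    -- UX is the unit normal of X at q; UY is the appropriately oriented
    -- unit normal of the inverse patch Y at q
    (hUXunit : ‖UX‖ = 1) (hUXs : ⟪Xs, UX⟫ = 0) (hUXu : ⟪Xu, UX⟫ = 0)
    (hUY : UY = -UX + (2 * ⟪UX, X q - c⟫ / ‖X q - c‖ ^ 2) • (X q - c))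
    -- fundamental form coefficients of X and Y at q
    (EX FX GX eX fX gX EY FY GY eY fY gY lam eta KX HX KY HY : ℝ)
    (hEX : EX = ⟪Xs, Xs⟫) (hFX : FX = ⟪Xs, Xu⟫) (hGX : GX = ⟪Xu, Xu⟫)
    (heX : eX = ⟪Xss, UX⟫) (hfX : fX = ⟪Xsu, UX⟫) (hgX : gX = ⟪Xuu, UX⟫)
    (hEY : EY = ⟪Ys, Ys⟫) (hFY : FY = ⟪Ys, Yu⟫) (hGY : GY = ⟪Yu, Yu⟫)
    (heY : eY = ⟪Yss, UY⟫) (hfY : fY = ⟪Ysu, UY⟫) (hgY : gY = ⟪Yuu, UY⟫)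
    -- regularity of X at q
    (hreg : 0 < EX * GX - FX ^ 2)
    (hlam : lam = r ^ 2 / ‖X q - c‖ ^ 2) (heta : eta = ⟪UX, X q - c⟫)
    (hKX : KX = (eX * gX - fX ^ 2) / (EX * GX - FX ^ 2))
    (hHX : HX = (eX * GX - 2 * fX * FX + gX * EX) / (2 * (EX * GX - FX ^ 2)))
    (hKY : KY = (eY * gY - fY ^ 2) / (EY * GY - FY ^ 2))
    (hHY : HY = (eY * GY - 2 * fY * FY + gY * EY) / (2 * (EY * GY - FY ^ 2))) :
    KY = lam⁻¹ ^ 2 * KX + (4 / r ^ 2) * lam⁻¹ * eta * HX + (4 / r ^ 4) * eta ^ 2 := by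
  have hYfun : Y = fun p => c + (r ^ 2 * (⟪X p - c, X p - c⟫)⁻¹) • (X p - c) := by
    funext p
    rw [hY, Function.comp_apply, hΦ, real_inner_self_eq_norm_sq, div_eq_mul_inv]
  rw [← real_inner_self_eq_norm_sq] at hlam hUY
  have hne : ⟪X q - c, X q - c⟫ ≠ 0 := by
    rw [real_inner_self_eq_norm_sq]
    exact pow_ne_zero 2 (norm_ne_zero_iff.mpr (sub_ne_zero.mpr (hXc q)))
  -- first derivatives
  have hYs' : Ys = (r ^ 2 * (⟪X q - c, X q - c⟫)⁻¹) • Xs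
      - (2 * r ^ 2 * ((⟪X q - c, X q - c⟫)⁻¹ * (⟪X q - c, X q - c⟫)⁻¹ *
          ⟪X q - c, Xs⟫)) • (X q - c) := by
    rw [hYs, aux_first c r X Y hX hXc hYfun q (1, 0), ← hXs]
  have hYu' : Yu = (r ^ 2 * (⟪X q - c, X q - c⟫)⁻¹) • Xu
      - (2 * r ^ 2 * ((⟪X q - c, X q - c⟫)⁻¹ * (⟪X q - c, X q - c⟫)⁻¹ *
          ⟪X q - c, Xu⟫)) • (X q - c) := by
    rw [hYu, aux_first c r X Y hX hXc hYfun q (0, 1), ← hXu]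
  -- second derivatives
  have hYss' := aux_second c r X Y hX hXc hYfun q (1, 0) (1, 0)
  have hYsu' := aux_second c r X Y hX hXc hYfun q (1, 0) (0, 1)
  have hYuu' := aux_second c r X Y hX hXc hYfun q (0, 1) (0, 1)
  rw [← hXs, ← hXss, ← hYss, ← hEX] at hYss'
  rw [← hXs, ← hXu, ← hXsu, ← hYsu, ← hFX] at hYsu'
  rw [← hXu, ← hXuu, ← hYuu, ← hGX] at hYuu'
  rw [← heta] at hUY
  set dv := X q - c with hdv
  set n : ℝ := ⟪dv, dv⟫ with hn
  set ts : ℝ := ⟪dv, Xs⟫ with hts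
  set tu : ℝ := ⟪dv, Xu⟫ with htu
  set bss : ℝ := ⟪dv, Xss⟫ with hbss
  set bsu : ℝ := ⟪dv, Xsu⟫ with hbsu
  set buu : ℝ := ⟪dv, Xuu⟫ with hbuu
  have c1 : (⟪Xs, dv⟫ : ℝ) = ts := by rw [hts]; exact real_inner_comm _ _
  have c2 : (⟪Xu, dv⟫ : ℝ) = tu := by rw [htu]; exact real_inner_comm _ _
  have c3 : (⟪Xss, dv⟫ : ℝ) = bss := by rw [hbss]; exact real_inner_comm _ _
  have c4 : (⟪Xsu, dv⟫ : ℝ) = bsu := by rw [hbsu]; exact real_inner_comm _ _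
  have c5 : (⟪Xuu, dv⟫ : ℝ) = buu := by rw [hbuu]; exact real_inner_comm _ _
  have c6 : (⟪dv, UX⟫ : ℝ) = eta := by rw [heta]; exact real_inner_comm _ _
  have c7 : (⟪Xss, UX⟫ : ℝ) = eX := heX.symm
  have c8 : (⟪Xsu, UX⟫ : ℝ) = fX := hfX.symm
  have c9 : (⟪Xuu, UX⟫ : ℝ) = gX := hgX.symm
  have c10 : (⟪Xs, Xs⟫ : ℝ) = EX := hEX.symm
  have c11 : (⟪Xs, Xu⟫ : ℝ) = FX := hFX.symm
  have c12 : (⟪Xu, Xs⟫ : ℝ) = FX := by rw [hFX]; exact real_inner_comm _ _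
  have c13 : (⟪Xu, Xu⟫ : ℝ) = GX := hGX.symm
  clear_value dv n ts tu bss bsu buu
  -- first fundamental form
  have hEY' : EY = (r ^ 2 / n) ^ 2 * EX := by
    rw [hEY, hYs']
    simp only [inner_sub_left, inner_sub_right, real_inner_smul_left, real_inner_smul_right,
      c1, c10, ← hn, ← hts]
    field_simp
    ring
  have hFY' : FY = (r ^ 2 / n) ^ 2 * FX := by
    rw [hFY, hYs', hYu']
    simp only [inner_sub_left, inner_sub_right, real_inner_smul_left, real_inner_smul_right,
      c1, c2, c11, c12, ← hn, ← hts, ← htu]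
    field_simp
    ring
  have hGY' : GY = (r ^ 2 / n) ^ 2 * GX := by
    rw [hGY, hYu']
    simp only [inner_sub_left, inner_sub_right, real_inner_smul_left, real_inner_smul_right,
      c2, c13, ← hn, ← htu]
    field_simp
    ring
  -- second fundamental form
  have heY' : eY = -(r ^ 2 / n * eX) - 2 * r ^ 2 * eta / n ^ 2 * EX := by
    rw [heY, hYss', hUY]
    simp only [inner_sub_left, inner_sub_right, inner_add_left, inner_add_right,
      inner_neg_left, inner_neg_right, real_inner_smul_left, real_inner_smul_right,
      c1, c3, c6, c7, c10, hUXs, ← hn, ← hts, ← hbss]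
    field_simp
    ring
  have hfY' : fY = -(r ^ 2 / n * fX) - 2 * r ^ 2 * eta / n ^ 2 * FX := by
    rw [hfY, hYsu', hUY]
    simp only [inner_sub_left, inner_sub_right, inner_add_left, inner_add_right,
      inner_neg_left, inner_neg_right, real_inner_smul_left, real_inner_smul_right,
      c1, c2, c4, c6, c8, c11, c12, hUXs, hUXu, ← hn, ← hts, ← htu, ← hbsu]
    field_simp
    ring
  have hgY' : gY = -(r ^ 2 / n * gX) - 2 * r ^ 2 * eta / n ^ 2 * GX := by
    rw [hgY, hYuu', hUY]
    simp only [inner_sub_left, inner_sub_right, inner_add_left, inner_add_right,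
      inner_neg_left, inner_neg_right, real_inner_smul_left, real_inner_smul_right,
      c2, c5, c6, c9, c13, hUXu, ← hn, ← htu, ← hbuu]
    field_simp
    ring
  -- final algebra
  have hd : EX * GX - FX ^ 2 ≠ 0 := ne_of_gt hreg
  have hr' : r ≠ 0 := ne_of_gt hr
  have h1 : eY * gY - fY ^ 2 = (r ^ 4 / n ^ 2) * (eX * gX - fX ^ 2)
      + (2 * r ^ 4 * eta / n ^ 3) * (eX * GX - 2 * fX * FX + gX * EX)
      + (4 * r ^ 4 * eta ^ 2 / n ^ 4) * (EX * GX - FX ^ 2) := by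
    rw [heY', hfY', hgY']; ring
  have h2 : EY * GY - FY ^ 2 = (r ^ 8 / n ^ 4) * (EX * GX - FX ^ 2) := by
    rw [hEY', hFY', hGY']; ring
  rw [hKY, h1, h2, hKX, hHX, hlam]
  have hd' : GX * EX - FX ^ 2 ≠ 0 := by rw [mul_comm]; exact hd
  field_simp
  ring
end

section
/- Let Y = Φ∘X be the inverse surface of X under inversion Φ[c,r], with λ = r²/‖X−c‖² and η = ⟨U_X, X−c⟩. Then the mean curvatures satisfy H_Y = −λ⁻¹H_X − 2η/r². -/
open RealInnerProductSpace

set_option maxHeartbeats 2000000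

private lemma inv_fderiv_first
    (c : EuclideanSpace ℝ (Fin 3)) (r : ℝ)
    (X : ℝ × ℝ → EuclideanSpace ℝ (Fin 3)) (hX : ContDiff ℝ 2 X)
    (hXc : ∀ p, X p ≠ c)
    (Y : ℝ × ℝ → EuclideanSpace ℝ (Fin 3))
    (hYfun : Y = fun p => c + (r ^ 2 * (⟪X p - c, X p - c⟫ : ℝ)⁻¹) • (X p - c))
    (q : ℝ × ℝ) (w : ℝ × ℝ) :
    fderiv ℝ Y q w = (r ^ 2 * (⟪X q - c, X q - c⟫ : ℝ)⁻¹) • fderiv ℝ X q w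
      - (2 * r ^ 2 * ⟪X q - c, fderiv ℝ X q w⟫ * ((⟪X q - c, X q - c⟫ : ℝ) ^ 2)⁻¹) • (X q - c) := by
  have hXd : Differentiable ℝ X := hX.differentiable (by norm_num)
  have hvd : ∀ p, HasFDerivAt (fun t => X t - c) (fderiv ℝ X p) p :=
    fun p => ((hXd p).hasFDerivAt).sub_const c
  have hg0 : ∀ p, (⟪X p - c, X p - c⟫ : ℝ) ≠ 0 := fun p =>
    inner_self_ne_zero.mpr (sub_ne_zero.mpr (hXc p))
  have hgHas : ∀ p, HasFDerivAt (fun t => (⟪X t - c, X t - c⟫ : ℝ))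
      ((fderivInnerCLM ℝ (X p - c, X p - c)).comp ((fderiv ℝ X p).prod (fderiv ℝ X p))) p :=
    fun p => (hvd p).inner ℝ (hvd p)
  have hsHas : ∀ p, HasFDerivAt (fun t => r ^ 2 * (⟪X t - c, X t - c⟫ : ℝ)⁻¹)
      (r ^ 2 • ((ContinuousLinearMap.smulRight (1 : ℝ →L[ℝ] ℝ) (-((⟪X p - c, X p - c⟫ : ℝ) ^ 2)⁻¹)).comp
        ((fderivInnerCLM ℝ (X p - c, X p - c)).comp ((fderiv ℝ X p).prod (fderiv ℝ X p))))) p :=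
    fun p => ((hasFDerivAt_inv (hg0 p)).comp p (hgHas p)).const_mul (r ^ 2)
  have hYHas : HasFDerivAt Y
      ((r ^ 2 * (⟪X q - c, X q - c⟫ : ℝ)⁻¹) • (fderiv ℝ X q)
        + (r ^ 2 • ((ContinuousLinearMap.smulRight (1 : ℝ →L[ℝ] ℝ) (-((⟪X q - c, X q - c⟫ : ℝ) ^ 2)⁻¹)).comp
        ((fderivInnerCLM ℝ (X q - c, X q - c)).comp ((fderiv ℝ X q).prod (fderiv ℝ X q))))).smulRight (X q - c)) q := by
    rw [hYfun]
    exact ((hsHas q).smul (hvd q)).const_add c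
  rw [hYHas.fderiv]
  simp only [ContinuousLinearMap.add_apply, ContinuousLinearMap.coe_smul', Pi.smul_apply,
    ContinuousLinearMap.smulRight_apply, ContinuousLinearMap.comp_apply,
    ContinuousLinearMap.prod_apply, fderivInnerCLM_apply, ContinuousLinearMap.one_apply,
    smul_eq_mul, real_inner_comm (fderiv ℝ X q w) (X q - c)]
  match_scalars <;> ring

private lemma inv_fderiv_second
    (c : EuclideanSpace ℝ (Fin 3)) (r : ℝ) (hr : r ≠ 0)
    (X : ℝ × ℝ → EuclideanSpace ℝ (Fin 3)) (hX : ContDiff ℝ 2 X)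
    (hXc : ∀ p, X p ≠ c)
    (Y : ℝ × ℝ → EuclideanSpace ℝ (Fin 3))
    (hYfun : Y = fun p => c + (r ^ 2 * (⟪X p - c, X p - c⟫ : ℝ)⁻¹) • (X p - c))
    (q : ℝ × ℝ) (w w' : ℝ × ℝ) :
    fderiv ℝ (fun p => fderiv ℝ Y p w) q w' =
      (r ^ 2 * (⟪X q - c, X q - c⟫ : ℝ)⁻¹) • fderiv ℝ (fun p => fderiv ℝ X p w) q w'
      - (2 * r ^ 2 * ⟪X q - c, fderiv ℝ X q w'⟫ * ((⟪X q - c, X q - c⟫ : ℝ) ^ 2)⁻¹) • fderiv ℝ X q w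
      - (2 * r ^ 2 * ⟪X q - c, fderiv ℝ X q w⟫ * ((⟪X q - c, X q - c⟫ : ℝ) ^ 2)⁻¹) • fderiv ℝ X q w'
      + (r ^ 2 * (8 * ⟪X q - c, fderiv ℝ X q w⟫ * ⟪X q - c, fderiv ℝ X q w'⟫ * ((⟪X q - c, X q - c⟫ : ℝ) ^ 3)⁻¹
          - 2 * (⟪fderiv ℝ X q w, fderiv ℝ X q w'⟫
            + ⟪X q - c, fderiv ℝ (fun p => fderiv ℝ X p w) q w'⟫) * ((⟪X q - c, X q - c⟫ : ℝ) ^ 2)⁻¹)) • (X q - c) := by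
  have hXd : Differentiable ℝ X := hX.differentiable (by norm_num)
  have hvd : ∀ p, HasFDerivAt (fun t => X t - c) (fderiv ℝ X p) p :=
    fun p => ((hXd p).hasFDerivAt).sub_const c
  have hg0 : ∀ p, (⟪X p - c, X p - c⟫ : ℝ) ≠ 0 := fun p =>
    inner_self_ne_zero.mpr (sub_ne_zero.mpr (hXc p))
  have hgHas : ∀ p, HasFDerivAt (fun t => (⟪X t - c, X t - c⟫ : ℝ))
      ((fderivInnerCLM ℝ (X p - c, X p - c)).comp ((fderiv ℝ X p).prod (fderiv ℝ X p))) p :=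
    fun p => (hvd p).inner ℝ (hvd p)
  have hsHas : ∀ p, HasFDerivAt (fun t => r ^ 2 * (⟪X t - c, X t - c⟫ : ℝ)⁻¹)
      (r ^ 2 • ((ContinuousLinearMap.smulRight (1 : ℝ →L[ℝ] ℝ) (-((⟪X p - c, X p - c⟫ : ℝ) ^ 2)⁻¹)).comp
        ((fderivInnerCLM ℝ (X p - c, X p - c)).comp ((fderiv ℝ X p).prod (fderiv ℝ X p))))) p :=
    fun p => ((hasFDerivAt_inv (hg0 p)).comp p (hgHas p)).const_mul (r ^ 2)
  have hYHas : ∀ p, HasFDerivAt Y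
      ((r ^ 2 * (⟪X p - c, X p - c⟫ : ℝ)⁻¹) • (fderiv ℝ X p)
        + (r ^ 2 • ((ContinuousLinearMap.smulRight (1 : ℝ →L[ℝ] ℝ) (-((⟪X p - c, X p - c⟫ : ℝ) ^ 2)⁻¹)).comp
        ((fderivInnerCLM ℝ (X p - c, X p - c)).comp ((fderiv ℝ X p).prod (fderiv ℝ X p))))).smulRight (X p - c)) p := by
    intro p; rw [hYfun]
    exact ((hsHas p).smul (hvd p)).const_add c
  have hfY : ∀ p, fderiv ℝ Y p w = (r ^ 2 * (⟪X p - c, X p - c⟫ : ℝ)⁻¹) • fderiv ℝ X p w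
      + (r ^ 2 * (-((⟪X p - c, X p - c⟫ : ℝ) * (⟪X p - c, X p - c⟫ : ℝ))⁻¹ * (⟪X p - c, fderiv ℝ X p w⟫ + ⟪fderiv ℝ X p w, X p - c⟫))) • (X p - c) := by
    intro p
    rw [(hYHas p).fderiv]
    simp [ContinuousLinearMap.smulRight_apply, fderivInnerCLM_apply, ← pow_two, mul_comm, mul_assoc, mul_left_comm]
  -- differentiability of the field p ↦ fderiv X p w
  have hfd1 : ContDiff ℝ 1 (fderiv ℝ X) := hX.fderiv_right (by norm_num)
  have hS1d : Differentiable ℝ (fun p => fderiv ℝ X p w) :=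
    (hfd1.differentiable (by norm_num)).clm_apply (differentiable_const w)
  have hS1Has : HasFDerivAt (fun p => fderiv ℝ X p w) (fderiv ℝ (fun p => fderiv ℝ X p w) q) q :=
    (hS1d q).hasFDerivAt
  -- derivative of the inner product term
  have hipHas : HasFDerivAt (fun p => (⟪X p - c, fderiv ℝ X p w⟫ + ⟪fderiv ℝ X p w, X p - c⟫ : ℝ))
      (((fderivInnerCLM ℝ (X q - c, fderiv ℝ X q w)).comp ((fderiv ℝ X q).prod (fderiv ℝ (fun p => fderiv ℝ X p w) q)))
        + ((fderivInnerCLM ℝ (fderiv ℝ X q w, X q - c)).comp ((fderiv ℝ (fun p => fderiv ℝ X p w) q).prod (fderiv ℝ X q)))) q :=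
    ((hvd q).inner ℝ hS1Has).add (hS1Has.inner ℝ (hvd q))
  -- derivative of p ↦ -((g p)^2)⁻¹
  have hmHas := (hgHas q).mul (hgHas q)
  have hminvHas := (hasFDerivAt_inv (mul_ne_zero (hg0 q) (hg0 q))).comp q hmHas
  have hnegHas := hminvHas.neg
  have htHas := ((hnegHas.mul hipHas).const_mul (r ^ 2))
  have hD1Has := ((hsHas q).smul hS1Has).add ((htHas).smul (hvd q))
  have he : (fun p => fderiv ℝ Y p w) = fun p => (r ^ 2 * (⟪X p - c, X p - c⟫ : ℝ)⁻¹) • fderiv ℝ X p w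
      + (r ^ 2 * (-((⟪X p - c, X p - c⟫ : ℝ) * (⟪X p - c, X p - c⟫ : ℝ))⁻¹ * (⟪X p - c, fderiv ℝ X p w⟫ + ⟪fderiv ℝ X p w, X p - c⟫))) • (X p - c) :=
    funext hfY
  simp only [Function.comp_def, Pi.mul_def, Pi.neg_def, Pi.add_def, Pi.smul_def'] at hD1Has
  rw [he, hD1Has.fderiv]
  simp only [ContinuousLinearMap.add_apply, ContinuousLinearMap.coe_smul', Pi.smul_apply,
    ContinuousLinearMap.smulRight_apply, ContinuousLinearMap.comp_apply,
    ContinuousLinearMap.prod_apply, fderivInnerCLM_apply, ContinuousLinearMap.one_apply,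
    ContinuousLinearMap.neg_apply, smul_eq_mul, ContinuousLinearMap.toSpanSingleton_apply,
    real_inner_comm (fderiv ℝ X q w) (X q - c),
    real_inner_comm (fderiv ℝ X q w') (X q - c),
    real_inner_comm (fderiv ℝ (fun p => fderiv ℝ X p w) q w') (X q - c),
    real_inner_comm (fderiv ℝ X q w') (fderiv ℝ X q w)]
  have hρ0 : (⟪X q - c, X q - c⟫ : ℝ) ≠ 0 := hg0 q
  set ρ : ℝ := ⟪X q - c, X q - c⟫ with hρ
  set a1 : ℝ := ⟪X q - c, fderiv ℝ X q w⟫ with ha1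
  set a2 : ℝ := ⟪X q - c, fderiv ℝ X q w'⟫ with ha2
  set a3 : ℝ := ⟪fderiv ℝ X q w, fderiv ℝ X q w'⟫ with ha3
  set a4 : ℝ := ⟪X q - c, fderiv ℝ (fun p => fderiv ℝ X p w) q w'⟫ with ha4
  match_scalars <;> field_simp <;> ring

/-- For the inverse surface `Y = Φ∘X` under the inversion `Φ[c,r]`, with `λ = r²/‖X−c‖²`
and `η = ⟨U_X, X−c⟩`, the mean curvatures satisfy `H_Y = −λ⁻¹H_X − 2η/r²`. -/
theorem inverse_surface_mean_curvature
    (c : EuclideanSpace ℝ (Fin 3)) (r : ℝ) (hr : 0 < r)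
    (Φ : EuclideanSpace ℝ (Fin 3) → EuclideanSpace ℝ (Fin 3))
    (hΦ : ∀ p, Φ p = c + (r ^ 2 / ‖p - c‖ ^ 2) • (p - c))
    (X : ℝ × ℝ → EuclideanSpace ℝ (Fin 3)) (hX : ContDiff ℝ 2 X)
    (hXc : ∀ q, X q ≠ c)
    (Y : ℝ × ℝ → EuclideanSpace ℝ (Fin 3)) (hY : Y = Φ ∘ X)
    (q : ℝ × ℝ)
    -- first and second partial derivatives of X and Y at q
    (Xs Xu Xss Xsu Xuu Ys Yu Yss Ysu Yuu UX UY : EuclideanSpace ℝ (Fin 3))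
    (hXs : Xs = fderiv ℝ X q (1, 0)) (hXu : Xu = fderiv ℝ X q (0, 1))
    (hXss : Xss = fderiv ℝ (fun p => fderiv ℝ X p (1, 0)) q (1, 0))
    (hXsu : Xsu = fderiv ℝ (fun p => fderiv ℝ X p (1, 0)) q (0, 1))
    (hXuu : Xuu = fderiv ℝ (fun p => fderiv ℝ X p (0, 1)) q (0, 1))
    (hYs : Ys = fderiv ℝ Y q (1, 0)) (hYu : Yu = fderiv ℝ Y q (0, 1))
    (hYss : Yss = fderiv ℝ (fun p => fderiv ℝ Y p (1, 0)) q (1, 0))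
    (hYsu : Ysu = fderiv ℝ (fun p => fderiv ℝ Y p (1, 0)) q (0, 1))
    (hYuu : Yuu = fderiv ℝ (fun p => fderiv ℝ Y p (0, 1)) q (0, 1))
    -- UX is the unit normal of X at q; UY is the appropriately oriented
    -- unit normal of the inverse patch Y at q
    (hUXunit : ‖UX‖ = 1) (hUXs : ⟪Xs, UX⟫ = 0) (hUXu : ⟪Xu, UX⟫ = 0)
    (hUY : UY = -UX + (2 * ⟪UX, X q - c⟫ / ‖X q - c‖ ^ 2) • (X q - c))
    -- fundamental form coefficients of X and Y at q
    (EX FX GX eX fX gX EY FY GY eY fY gY lam eta KX HX KY HY : ℝ)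
    (hEX : EX = ⟪Xs, Xs⟫) (hFX : FX = ⟪Xs, Xu⟫) (hGX : GX = ⟪Xu, Xu⟫)
    (heX : eX = ⟪Xss, UX⟫) (hfX : fX = ⟪Xsu, UX⟫) (hgX : gX = ⟪Xuu, UX⟫)
    (hEY : EY = ⟪Ys, Ys⟫) (hFY : FY = ⟪Ys, Yu⟫) (hGY : GY = ⟪Yu, Yu⟫)
    (heY : eY = ⟪Yss, UY⟫) (hfY : fY = ⟪Ysu, UY⟫) (hgY : gY = ⟪Yuu, UY⟫)
    -- regularity of X at q
    (hreg : 0 < EX * GX - FX ^ 2)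
    (hlam : lam = r ^ 2 / ‖X q - c‖ ^ 2) (heta : eta = ⟪UX, X q - c⟫)
    (hKX : KX = (eX * gX - fX ^ 2) / (EX * GX - FX ^ 2))
    (hHX : HX = (eX * GX - 2 * fX * FX + gX * EX) / (2 * (EX * GX - FX ^ 2)))
    (hKY : KY = (eY * gY - fY ^ 2) / (EY * GY - FY ^ 2))
    (hHY : HY = (eY * GY - 2 * fY * FY + gY * EY) / (2 * (EY * GY - FY ^ 2))) :
    HY = -lam⁻¹ * HX - 2 * eta / r ^ 2 := by
  
  have hr' : r ≠ 0 := ne_of_gt hr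
  have hYfun : Y = fun p => c + (r ^ 2 * (⟪X p - c, X p - c⟫ : ℝ)⁻¹) • (X p - c) := by
    funext p
    rw [hY, Function.comp_apply, hΦ, div_eq_mul_inv, ← real_inner_self_eq_norm_sq]
  have hfirst := inv_fderiv_first c r X hX hXc Y hYfun q
  have hsecond := inv_fderiv_second c r hr' X hX hXc Y hYfun q
  have hnorm : ‖X q - c‖ ^ 2 = (⟪X q - c, X q - c⟫ : ℝ) := (real_inner_self_eq_norm_sq _).symm
  have hR0 : (⟪X q - c, X q - c⟫ : ℝ) ≠ 0 := inner_self_ne_zero.mpr (sub_ne_zero.mpr (hXc q))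
  have hne : EX * GX - FX ^ 2 ≠ 0 := ne_of_gt hreg
  -- vector formulas for the derivatives of Y
  have hYsE : Ys = (r ^ 2 * (⟪X q - c, X q - c⟫ : ℝ)⁻¹) • Xs
      - (2 * r ^ 2 * ⟪X q - c, Xs⟫ * ((⟪X q - c, X q - c⟫ : ℝ) ^ 2)⁻¹) • (X q - c) := by
    rw [hYs, hfirst (1, 0), ← hXs]
  have hYuE : Yu = (r ^ 2 * (⟪X q - c, X q - c⟫ : ℝ)⁻¹) • Xu
      - (2 * r ^ 2 * ⟪X q - c, Xu⟫ * ((⟪X q - c, X q - c⟫ : ℝ) ^ 2)⁻¹) • (X q - c) := by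
    rw [hYu, hfirst (0, 1), ← hXu]
  have hYssE : Yss = (r ^ 2 * (⟪X q - c, X q - c⟫ : ℝ)⁻¹) • Xss
      - (2 * r ^ 2 * ⟪X q - c, Xs⟫ * ((⟪X q - c, X q - c⟫ : ℝ) ^ 2)⁻¹) • Xs
      - (2 * r ^ 2 * ⟪X q - c, Xs⟫ * ((⟪X q - c, X q - c⟫ : ℝ) ^ 2)⁻¹) • Xs
      + (r ^ 2 * (8 * ⟪X q - c, Xs⟫ * ⟪X q - c, Xs⟫ * ((⟪X q - c, X q - c⟫ : ℝ) ^ 3)⁻¹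
          - 2 * (⟪Xs, Xs⟫ + ⟪X q - c, Xss⟫) * ((⟪X q - c, X q - c⟫ : ℝ) ^ 2)⁻¹)) • (X q - c) := by
    rw [hYss, hsecond (1, 0) (1, 0), ← hXs, ← hXss]
  have hYsuE : Ysu = (r ^ 2 * (⟪X q - c, X q - c⟫ : ℝ)⁻¹) • Xsu
      - (2 * r ^ 2 * ⟪X q - c, Xu⟫ * ((⟪X q - c, X q - c⟫ : ℝ) ^ 2)⁻¹) • Xs
      - (2 * r ^ 2 * ⟪X q - c, Xs⟫ * ((⟪X q - c, X q - c⟫ : ℝ) ^ 2)⁻¹) • Xu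
      + (r ^ 2 * (8 * ⟪X q - c, Xs⟫ * ⟪X q - c, Xu⟫ * ((⟪X q - c, X q - c⟫ : ℝ) ^ 3)⁻¹
          - 2 * (⟪Xs, Xu⟫ + ⟪X q - c, Xsu⟫) * ((⟪X q - c, X q - c⟫ : ℝ) ^ 2)⁻¹)) • (X q - c) := by
    rw [hYsu, hsecond (1, 0) (0, 1), ← hXs, ← hXu, ← hXsu]
  have hYuuE : Yuu = (r ^ 2 * (⟪X q - c, X q - c⟫ : ℝ)⁻¹) • Xuu
      - (2 * r ^ 2 * ⟪X q - c, Xu⟫ * ((⟪X q - c, X q - c⟫ : ℝ) ^ 2)⁻¹) • Xu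
      - (2 * r ^ 2 * ⟪X q - c, Xu⟫ * ((⟪X q - c, X q - c⟫ : ℝ) ^ 2)⁻¹) • Xu
      + (r ^ 2 * (8 * ⟪X q - c, Xu⟫ * ⟪X q - c, Xu⟫ * ((⟪X q - c, X q - c⟫ : ℝ) ^ 3)⁻¹
          - 2 * (⟪Xu, Xu⟫ + ⟪X q - c, Xuu⟫) * ((⟪X q - c, X q - c⟫ : ℝ) ^ 2)⁻¹)) • (X q - c) := by
    rw [hYuu, hsecond (0, 1) (0, 1), ← hXu, ← hXuu]
  set v : EuclideanSpace ℝ (Fin 3) := X q - c with hvdef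
  -- the first fundamental form coefficients
  have hEY2 : EY = (r ^ 2 / ⟪v, v⟫) ^ 2 * EX := by
    rw [hEY, hYsE, hEX]
    simp only [inner_sub_left, inner_sub_right, real_inner_smul_left, real_inner_smul_right,
      real_inner_comm Xs (v)]
    set R := (⟪v, v⟫ : ℝ) with hsR
    set b1 := (⟪v, Xs⟫ : ℝ) with hs1
    set b2 := (⟪v, Xu⟫ : ℝ) with hs2
    set b3 := (⟪v, Xss⟫ : ℝ) with hs3
    set b4 := (⟪v, Xsu⟫ : ℝ) with hs4
    set b5 := (⟪v, Xuu⟫ : ℝ) with hs5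
    set b6 := (⟪Xs, Xs⟫ : ℝ) with hs6
    set b7 := (⟪Xs, Xu⟫ : ℝ) with hs7
    set b8 := (⟪Xu, Xu⟫ : ℝ) with hs8
    set b9 := (⟪Xss, UX⟫ : ℝ) with hs9
    set b10 := (⟪Xsu, UX⟫ : ℝ) with hs10
    set b11 := (⟪Xuu, UX⟫ : ℝ) with hs11
    set b12 := (⟪UX, v⟫ : ℝ) with hs12
    field_simp
    ring
  have hFY2 : FY = (r ^ 2 / ⟪v, v⟫) ^ 2 * FX := by
    rw [hFY, hYsE, hYuE, hFX]
    simp only [inner_sub_left, inner_sub_right, real_inner_smul_left, real_inner_smul_right,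
      real_inner_comm Xs (v), real_inner_comm Xu Xs]
    set R := (⟪v, v⟫ : ℝ) with hsR
    set b1 := (⟪v, Xs⟫ : ℝ) with hs1
    set b2 := (⟪v, Xu⟫ : ℝ) with hs2
    set b3 := (⟪v, Xss⟫ : ℝ) with hs3
    set b4 := (⟪v, Xsu⟫ : ℝ) with hs4
    set b5 := (⟪v, Xuu⟫ : ℝ) with hs5
    set b6 := (⟪Xs, Xs⟫ : ℝ) with hs6
    set b7 := (⟪Xs, Xu⟫ : ℝ) with hs7
    set b8 := (⟪Xu, Xu⟫ : ℝ) with hs8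
    set b9 := (⟪Xss, UX⟫ : ℝ) with hs9
    set b10 := (⟪Xsu, UX⟫ : ℝ) with hs10
    set b11 := (⟪Xuu, UX⟫ : ℝ) with hs11
    set b12 := (⟪UX, v⟫ : ℝ) with hs12
    field_simp
    ring
  have hGY2 : GY = (r ^ 2 / ⟪v, v⟫) ^ 2 * GX := by
    rw [hGY, hYuE, hGX]
    simp only [inner_sub_left, inner_sub_right, real_inner_smul_left, real_inner_smul_right,
      real_inner_comm Xu (v)]
    set R := (⟪v, v⟫ : ℝ) with hsR
    set b1 := (⟪v, Xs⟫ : ℝ) with hs1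
    set b2 := (⟪v, Xu⟫ : ℝ) with hs2
    set b3 := (⟪v, Xss⟫ : ℝ) with hs3
    set b4 := (⟪v, Xsu⟫ : ℝ) with hs4
    set b5 := (⟪v, Xuu⟫ : ℝ) with hs5
    set b6 := (⟪Xs, Xs⟫ : ℝ) with hs6
    set b7 := (⟪Xs, Xu⟫ : ℝ) with hs7
    set b8 := (⟪Xu, Xu⟫ : ℝ) with hs8
    set b9 := (⟪Xss, UX⟫ : ℝ) with hs9
    set b10 := (⟪Xsu, UX⟫ : ℝ) with hs10
    set b11 := (⟪Xuu, UX⟫ : ℝ) with hs11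
    set b12 := (⟪UX, v⟫ : ℝ) with hs12
    field_simp
    ring
  -- the second fundamental form coefficients
  have heY2 : eY = -((r ^ 2 / ⟪v, v⟫) * eX)
      - 2 * (r ^ 2 / ⟪v, v⟫) * eta * EX / ⟪v, v⟫ := by
    rw [heY, hYssE, hUY, heX, heta, hEX, hnorm]
    simp only [inner_sub_left, inner_add_left, inner_add_right, inner_neg_left, inner_neg_right,
      real_inner_smul_left, real_inner_smul_right,
      real_inner_comm Xs (v), real_inner_comm Xss (v),
      real_inner_comm (v) UX, hUXs]
    set R := (⟪v, v⟫ : ℝ) with hsR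
    set b1 := (⟪v, Xs⟫ : ℝ) with hs1
    set b2 := (⟪v, Xu⟫ : ℝ) with hs2
    set b3 := (⟪v, Xss⟫ : ℝ) with hs3
    set b4 := (⟪v, Xsu⟫ : ℝ) with hs4
    set b5 := (⟪v, Xuu⟫ : ℝ) with hs5
    set b6 := (⟪Xs, Xs⟫ : ℝ) with hs6
    set b7 := (⟪Xs, Xu⟫ : ℝ) with hs7
    set b8 := (⟪Xu, Xu⟫ : ℝ) with hs8
    set b9 := (⟪Xss, UX⟫ : ℝ) with hs9
    set b10 := (⟪Xsu, UX⟫ : ℝ) with hs10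
    set b11 := (⟪Xuu, UX⟫ : ℝ) with hs11
    set b12 := (⟪UX, v⟫ : ℝ) with hs12
    field_simp
    ring
  have hfY2 : fY = -((r ^ 2 / ⟪v, v⟫) * fX)
      - 2 * (r ^ 2 / ⟪v, v⟫) * eta * FX / ⟪v, v⟫ := by
    rw [hfY, hYsuE, hUY, hfX, heta, hFX, hnorm]
    simp only [inner_sub_left, inner_add_left, inner_add_right, inner_neg_left, inner_neg_right,
      real_inner_smul_left, real_inner_smul_right,
      real_inner_comm Xs (v), real_inner_comm Xu (v), real_inner_comm Xsu (v),
      real_inner_comm (v) UX, hUXs, hUXu]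
    set R := (⟪v, v⟫ : ℝ) with hsR
    set b1 := (⟪v, Xs⟫ : ℝ) with hs1
    set b2 := (⟪v, Xu⟫ : ℝ) with hs2
    set b3 := (⟪v, Xss⟫ : ℝ) with hs3
    set b4 := (⟪v, Xsu⟫ : ℝ) with hs4
    set b5 := (⟪v, Xuu⟫ : ℝ) with hs5
    set b6 := (⟪Xs, Xs⟫ : ℝ) with hs6
    set b7 := (⟪Xs, Xu⟫ : ℝ) with hs7
    set b8 := (⟪Xu, Xu⟫ : ℝ) with hs8
    set b9 := (⟪Xss, UX⟫ : ℝ) with hs9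
    set b10 := (⟪Xsu, UX⟫ : ℝ) with hs10
    set b11 := (⟪Xuu, UX⟫ : ℝ) with hs11
    set b12 := (⟪UX, v⟫ : ℝ) with hs12
    field_simp
    ring
  have hgY2 : gY = -((r ^ 2 / ⟪v, v⟫) * gX)
      - 2 * (r ^ 2 / ⟪v, v⟫) * eta * GX / ⟪v, v⟫ := by
    rw [hgY, hYuuE, hUY, hgX, heta, hGX, hnorm]
    simp only [inner_sub_left, inner_add_left, inner_add_right, inner_neg_left, inner_neg_right,
      real_inner_smul_left, real_inner_smul_right,
      real_inner_comm Xu (v), real_inner_comm Xuu (v),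
      real_inner_comm (v) UX, hUXu]
    set R := (⟪v, v⟫ : ℝ) with hsR
    set b1 := (⟪v, Xs⟫ : ℝ) with hs1
    set b2 := (⟪v, Xu⟫ : ℝ) with hs2
    set b3 := (⟪v, Xss⟫ : ℝ) with hs3
    set b4 := (⟪v, Xsu⟫ : ℝ) with hs4
    set b5 := (⟪v, Xuu⟫ : ℝ) with hs5
    set b6 := (⟪Xs, Xs⟫ : ℝ) with hs6
    set b7 := (⟪Xs, Xu⟫ : ℝ) with hs7
    set b8 := (⟪Xu, Xu⟫ : ℝ) with hs8
    set b9 := (⟪Xss, UX⟫ : ℝ) with hs9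
    set b10 := (⟪Xsu, UX⟫ : ℝ) with hs10
    set b11 := (⟪Xuu, UX⟫ : ℝ) with hs11
    set b12 := (⟪UX, v⟫ : ℝ) with hs12
    field_simp
    ring
  -- put everything together
  have hD : EY * GY - FY ^ 2 = (r ^ 2 / ⟪v, v⟫) ^ 4 * (EX * GX - FX ^ 2) := by
    rw [hEY2, hFY2, hGY2]; ring
  rw [hHY, hD, heY2, hfY2, hgY2, hEY2, hFY2, hGY2, hHX, hlam, hnorm]
  set R := (⟪v, v⟫ : ℝ) with hsR
  field_simp
  ring
end
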